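/- Let q = 1, let F be a Borel probability measure on ℝ, f ∈ L¹(F), and let g : ℝ → ℝ be continuous, supported in [l,u], and continuously differentiable on (l,u) with derivative extending continuously to [l,u]. Then ∫ f·g dF = −∫_l^u Ω_f(l,t) g'(t) dt, where Ω_f(l,t) = ∫ 𝟙{l ≤ x ≤ t} f(x) dF(x). -/
import Mathlib


open MeasureTheory Metric Set Filter Topology
open scoped ENNReal

theorem stmt4 (F : Measure ℝ) [IsProbabilityMeasure F]
    (f : ℝ → ℝ) (hf : Integrable f F)
    (g g' : ℝ → ℝ) (l u : ℝ) (hlu : l < u)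
    (hg_cont : Continuous g)
    (hg_supp : ∀ x, g x ≠ 0 → x ∈ Set.Icc l u)
    (hg_deriv : ∀ x ∈ Set.Ioo l u, HasDerivAt g (g' x) x)
    (hg'_cont : ContinuousOn g' (Set.Icc l u)) :
    ∫ x, f x * g x ∂F
      = - ∫ t in Set.Icc l u, (∫ x in Set.Icc l t, f x ∂F) * g' t := by
  set μ := F.restrict (Set.Icc l u) with hμ
  set ν := (volume : Measure ℝ).restrict (Set.Icc l u) with hν
  have hgu : g u = 0 := by
    have h1 : Tendsto g (𝓝[>] u) (𝓝 (g u)) :=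
      (hg_cont.tendsto u).mono_left nhdsWithin_le_nhds
    have h2 : Tendsto g (𝓝[>] u) (𝓝 0) := by
      apply Tendsto.congr' _ tendsto_const_nhds
      filter_upwards [self_mem_nhdsWithin] with x hx
      by_contra h
      exact absurd (hg_supp x (Ne.symm h)).2 (not_le.2 hx)
    exact tendsto_nhds_unique h1 h2
  have key : ∀ x ∈ Set.Icc l u, g x = -∫ t in x..u, g' t := by
    intro x hx
    have hftc : ∫ t in x..u, g' t = g u - g x := by
      apply intervalIntegral.integral_eq_sub_of_hasDeriv_right_of_le hx.2
      · exact hg_cont.continuousOn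
      · intro t ht
        exact (hg_deriv t ⟨lt_of_le_of_lt hx.1 ht.1, ht.2⟩).hasDerivWithinAt
      · exact (hg'_cont.mono (Set.Icc_subset_Icc hx.1 le_rfl)).intervalIntegrable_of_Icc hx.2
    rw [hftc, hgu]; ring
  have h1 : ∫ x, f x * g x ∂F = ∫ x, f x * g x ∂μ := by
    rw [hμ, ← integral_indicator measurableSet_Icc]
    congr 1; ext x
    by_cases hx : x ∈ Set.Icc l u
    · simp [hx]
    · have hg0 : g x = 0 := by by_contra h; exact hx (hg_supp x h)
      simp [hx, hg0]
  set S : Set (ℝ × ℝ) := {z | z.1 ≤ z.2} with hSdef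
  have hS : MeasurableSet S := measurableSet_le measurable_fst measurable_snd
  have hg'int : IntegrableOn g' (Set.Icc l u) := hg'_cont.integrableOn_Icc
  have hprod : Integrable (fun z : ℝ × ℝ => f z.1 * g' z.2) (μ.prod ν) :=
    hf.restrict.mul_prod hg'int
  have hind : Integrable (S.indicator fun z : ℝ × ℝ => f z.1 * g' z.2) (μ.prod ν) :=
    hprod.indicator hS
  -- step 2: rewrite g x as an integral over ν
  have h2 : ∫ x, f x * g x ∂μ
      = ∫ x, -∫ t, S.indicator (fun z : ℝ × ℝ => f z.1 * g' z.2) (x, t) ∂ν ∂μ := by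
    rw [hμ]
    apply setIntegral_congr_fun measurableSet_Icc
    intro x hx
    have hIcc : Set.Icc l u ∩ Set.Ici x = Set.Icc x u := by
      ext t
      constructor
      · rintro ⟨⟨_, h2⟩, h3⟩; exact ⟨h3, h2⟩
      · rintro ⟨h1, h2⟩; exact ⟨⟨le_trans hx.1 h1, h2⟩, h1⟩
    have hint : ∫ t, S.indicator (fun z : ℝ × ℝ => f z.1 * g' z.2) (x, t) ∂ν
        = f x * ∫ t in x..u, g' t := by
      have heq : ∀ t, S.indicator (fun z : ℝ × ℝ => f z.1 * g' z.2) (x, t)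
          = f x * (Set.Ici x).indicator g' t := by
        intro t
        by_cases h : x ≤ t <;>
          simp [Set.indicator_apply, hSdef, h]
      simp_rw [heq]
      rw [integral_const_mul]
      congr 1
      rw [hν, integral_indicator measurableSet_Ici,
        Measure.restrict_restrict measurableSet_Ici, Set.inter_comm, hIcc]
      rw [intervalIntegral.integral_of_le hx.2, ← integral_Icc_eq_integral_Ioc]
    show f x * g x = -∫ t, S.indicator (fun z : ℝ × ℝ => f z.1 * g' z.2) (x, t) ∂ν
    rw [hint, key x hx]
    ring
  -- swap
  have hswap : ∫ x, ∫ t, S.indicator (fun z : ℝ × ℝ => f z.1 * g' z.2) (x, t) ∂ν ∂μ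
      = ∫ t, ∫ x, S.indicator (fun z : ℝ × ℝ => f z.1 * g' z.2) (x, t) ∂μ ∂ν := by
    apply integral_integral_swap
    exact hind
  -- step 3: inner integral over μ
  have h3 : ∫ t, ∫ x, S.indicator (fun z : ℝ × ℝ => f z.1 * g' z.2) (x, t) ∂μ ∂ν
      = ∫ t in Set.Icc l u, (∫ x in Set.Icc l t, f x ∂F) * g' t := by
    rw [hν]
    apply setIntegral_congr_fun measurableSet_Icc
    intro t ht
    have heq : ∀ x, S.indicator (fun z : ℝ × ℝ => f z.1 * g' z.2) (x, t)
        = (Set.Iic t).indicator f x * g' t := by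
      intro x
      by_cases h : x ≤ t <;>
        simp [Set.indicator_apply, hSdef, h]
    simp_rw [heq]
    rw [integral_mul_const]
    congr 1
    have hset : Set.Iic t ∩ Set.Icc l u = Set.Icc l t := by
      ext x
      constructor
      · rintro ⟨h1, ⟨h2, _⟩⟩; exact ⟨h2, h1⟩
      · rintro ⟨h1, h2⟩; exact ⟨h2, ⟨h1, le_trans h2 ht.2⟩⟩
    rw [hμ, integral_indicator measurableSet_Iic,
      Measure.restrict_restrict measurableSet_Iic, hset]
  rw [h1, h2, integral_neg, hswap, h3]
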